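/- (Poincaré inequality on a cylinder.) Let Ω = U × ω where U ⊂ ℝ is open and ω ⊂ ℝ^{n−1} is a bounded open set, and let V(Ω) = {u ∈ W^{1,p}(Ω) : u = 0 on U × ∂ω}. Then there is a constant C_p > 0 depending only on p and ω such that for every u ∈ V(Ω), ‖u‖_{L^p(Ω)} ≤ C_p ‖∇u‖_{L^p(Ω)}. In particular the constant is independent of U. -/

import Mathlib

open MeasureTheory Set Filter Topology

noncomputable section

/-- The cross-section space `ℝ^{n-1}` (so the full space is `ℝ × Ed d ≅ ℝⁿ`, `n = d+1`). -/
abbrev Ed (d : ℕ) := EuclideanSpace ℝ (Fin d)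

variable {d : ℕ}

/-- Euclidean inner product on `ℝ × ℝ^{n-1} ≅ ℝⁿ`. -/
def vdot (v w : ℝ × Ed d) : ℝ := v.1 * w.1 + (inner ℝ v.2 w.2 : ℝ)

/-- Euclidean norm on `ℝ × ℝ^{n-1} ≅ ℝⁿ`. -/
def vnorm (v : ℝ × Ed d) : ℝ := Real.sqrt (v.1 ^ 2 + ‖v.2‖ ^ 2)

/-- Full gradient `∇u = (∂₁u, ∇_{X₂}u)` of `u : ℝ × ℝ^{n-1} → ℝ`. -/
def grad (u : ℝ × Ed d → ℝ) (x : ℝ × Ed d) : ℝ × Ed d :=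
  (deriv (fun t => u (t, x.2)) x.1, gradient (fun y => u (x.1, y)) x.2)

/-- The lower-right `(n-1)×(n-1)` block `A₂₂` of `A`, acting on cross-section vectors. -/
def A22 (A : Ed d → (ℝ × Ed d) →ₗ[ℝ] (ℝ × Ed d)) (y : Ed d) (w : Ed d) : Ed d :=
  (A y ((0 : ℝ), w)).2

/-- The row `A₁₂` of `A` applied to a cross-section vector: `A₁₂ · w`. -/
def A12dot (A : Ed d → (ℝ × Ed d) →ₗ[ℝ] (ℝ × Ed d)) (y : Ed d) (w : Ed d) : ℝ :=
  (A y ((0 : ℝ), w)).1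

/-- Uniform ellipticity: `A(X₂)ξ·ξ ≥ λ|ξ|²`. -/
def UniformlyElliptic (A : Ed d → (ℝ × Ed d) →ₗ[ℝ] (ℝ × Ed d)) (ω : Set (Ed d)) (lam : ℝ) :
    Prop :=
  ∀ y ∈ ω, ∀ v : ℝ × Ed d, lam * vnorm v ^ 2 ≤ vdot (A y v) v

/-- Uniform boundedness: `‖A(X₂)‖ ≤ C`. -/
def UniformlyBounded (A : Ed d → (ℝ × Ed d) →ₗ[ℝ] (ℝ × Ed d)) (ω : Set (Ed d)) (C : ℝ) :
    Prop :=
  ∀ y ∈ ω, ∀ v : ℝ × Ed d, vnorm (A y v) ≤ C * vnorm v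

/-- `A(X₂)` is a symmetric matrix. -/
def SymmetricMatrix (A : Ed d → (ℝ × Ed d) →ₗ[ℝ] (ℝ × Ed d)) (ω : Set (Ed d)) : Prop :=
  ∀ y ∈ ω, ∀ v w : ℝ × Ed d, vdot (A y v) w = vdot v (A y w)

/-- The entries of `A` are measurable functions of `X₂`. -/
def MeasurableEntries (A : Ed d → (ℝ × Ed d) →ₗ[ℝ] (ℝ × Ed d)) : Prop :=
  ∀ v : ℝ × Ed d, Measurable fun y => A y v

/-- Membership in (an idealized) `W^{1,p}(Ω)`. -/
def MemW1p (p : ℝ) (Ω : Set (ℝ × Ed d)) (u : ℝ × Ed d → ℝ) : Prop :=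
  ContinuousOn u (closure Ω) ∧ (∀ x ∈ Ω, DifferentiableAt ℝ u x) ∧
  MemLp u (ENNReal.ofReal p) (volume.restrict Ω) ∧
  MemLp (fun x => vnorm (grad u x)) (ENNReal.ofReal p) (volume.restrict Ω)

/-- Membership in `V(Ω) = {u ∈ W^{1,p}(Ω) : u = 0 on γ}`. -/
def MemV (p : ℝ) (Ω γ : Set (ℝ × Ed d)) (u : ℝ × Ed d → ℝ) : Prop :=
  MemW1p p Ω u ∧ ∀ x ∈ γ, u x = 0

/-- Energy `∫_Ω |A∇u·∇u|^{p/2}`. -/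
def energy (A : Ed d → (ℝ × Ed d) →ₗ[ℝ] (ℝ × Ed d)) (p : ℝ) (Ω : Set (ℝ × Ed d))
    (u : ℝ × Ed d → ℝ) : ℝ :=
  ∫ x in Ω, |vdot (A x.2 (grad u x)) (grad u x)| ^ (p / 2)

/-- Mass `∫_Ω |u|^p`. -/
def lpmass (p : ℝ) (Ω : Set (ℝ × Ed d)) (u : ℝ × Ed d → ℝ) : ℝ := ∫ x in Ω, |u x| ^ p

/-- The cylinder `Ω_ℓ = (-ℓ,ℓ) × ω`. -/
def OmL (ω : Set (Ed d)) (ℓ : ℝ) : Set (ℝ × Ed d) := Ioo (-ℓ) ℓ ×ˢ ω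

/-- The lateral boundary `γ_ℓ = (-ℓ,ℓ) × ∂ω`. -/
def gammaL (ω : Set (Ed d)) (ℓ : ℝ) : Set (ℝ × Ed d) := Ioo (-ℓ) ℓ ×ˢ frontier ω

/-- The semi-infinite cylinder `Ω_∞⁺ = (0,∞) × ω`. -/
def OmPinf (ω : Set (Ed d)) : Set (ℝ × Ed d) := Ioi (0 : ℝ) ×ˢ ω

/-- Its lateral boundary `γ_∞⁺ = (0,∞) × ∂ω`. -/
def gammaPinf (ω : Set (Ed d)) : Set (ℝ × Ed d) := Ioi (0 : ℝ) ×ˢ frontier ω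

/-- The semi-infinite cylinder `Ω_∞⁻ = (-∞,0) × ω`. -/
def OmMinf (ω : Set (Ed d)) : Set (ℝ × Ed d) := Iio (0 : ℝ) ×ˢ ω

/-- Its lateral boundary `γ_∞⁻ = (-∞,0) × ∂ω`. -/
def gammaMinf (ω : Set (Ed d)) : Set (ℝ × Ed d) := Iio (0 : ℝ) ×ˢ frontier ω

/-- The half cylinder `Ω_ℓ⁺ = (0,ℓ) × ω`. -/
def OmP (ω : Set (Ed d)) (ℓ : ℝ) : Set (ℝ × Ed d) := Ioo (0 : ℝ) ℓ ×ˢ ω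

/-- The half cylinder `Ω_ℓ⁻ = (-ℓ,0) × ω`. -/
def OmM (ω : Set (Ed d)) (ℓ : ℝ) : Set (ℝ × Ed d) := Ioo (-ℓ) (0 : ℝ) ×ˢ ω

/-- Set of Rayleigh quotients over `0 ≠ u ∈ V(Ω)`. -/
def rayleighSet (A : Ed d → (ℝ × Ed d) →ₗ[ℝ] (ℝ × Ed d)) (p : ℝ)
    (Ω γ : Set (ℝ × Ed d)) : Set ℝ :=
  { r | ∃ u : ℝ × Ed d → ℝ, MemV p Ω γ u ∧ 0 < lpmass p Ω u ∧
      r = energy A p Ω u / lpmass p Ω u }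

/-- First eigenvalue `λ_M¹(Ω_ℓ)` of the mixed problem. -/
def lambdaM1 (A : Ed d → (ℝ × Ed d) →ₗ[ℝ] (ℝ × Ed d)) (p : ℝ) (ω : Set (Ed d)) (ℓ : ℝ) : ℝ :=
  sInf (rayleighSet A p (OmL ω ℓ) (gammaL ω ℓ))

/-- `ν_∞⁺`. -/
def nuP (A : Ed d → (ℝ × Ed d) →ₗ[ℝ] (ℝ × Ed d)) (p : ℝ) (ω : Set (Ed d)) : ℝ :=
  sInf (rayleighSet A p (OmPinf ω) (gammaPinf ω))

/-- `ν_∞⁻`. -/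
def nuM (A : Ed d → (ℝ × Ed d) →ₗ[ℝ] (ℝ × Ed d)) (p : ℝ) (ω : Set (Ed d)) : ℝ :=
  sInf (rayleighSet A p (OmMinf ω) (gammaMinf ω))

/-- Membership in (an idealized) `W₀^{1,p}(ω)` on the cross-section. -/
def MemW01p (p : ℝ) (ω : Set (Ed d)) (w : Ed d → ℝ) : Prop :=
  ContinuousOn w (closure ω) ∧ (∀ y ∈ ω, DifferentiableAt ℝ w y) ∧
  MemLp w (ENNReal.ofReal p) (volume.restrict ω) ∧
  MemLp (fun y => ‖gradient w y‖) (ENNReal.ofReal p) (volume.restrict ω) ∧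
  (∀ y ∈ frontier ω, w y = 0)

/-- Cross-sectional energy `∫_ω |A₂₂∇w·∇w|^{p/2}`. -/
def energyCS (A : Ed d → (ℝ × Ed d) →ₗ[ℝ] (ℝ × Ed d)) (p : ℝ) (ω : Set (Ed d))
    (w : Ed d → ℝ) : ℝ :=
  ∫ y in ω, |(inner ℝ (A22 A y (gradient w y)) (gradient w y) : ℝ)| ^ (p / 2)

/-- Cross-sectional mass `∫_ω |w|^p`. -/
def massCS (p : ℝ) (ω : Set (Ed d)) (w : Ed d → ℝ) : ℝ := ∫ y in ω, |w y| ^ p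

/-- First eigenvalue `μ¹(ω)` of the cross-section problem. -/
def muOne (A : Ed d → (ℝ × Ed d) →ₗ[ℝ] (ℝ × Ed d)) (p : ℝ) (ω : Set (Ed d)) : ℝ :=
  sInf { r | ∃ w : Ed d → ℝ, MemW01p p ω w ∧ 0 < massCS p ω w ∧
      r = energyCS A p ω w / massCS p ω w }

/-- `u` is the positive normalized first eigenfunction of the mixed problem on `Ω_ℓ`. -/
def IsFirstEigenfunction (A : Ed d → (ℝ × Ed d) →ₗ[ℝ] (ℝ × Ed d)) (p : ℝ) (ω : Set (Ed d))
    (ℓ : ℝ) (u : ℝ × Ed d → ℝ) : Prop :=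
  MemV p (OmL ω ℓ) (gammaL ω ℓ) u ∧ (∀ x ∈ OmL ω ℓ, 0 < u x) ∧
  lpmass p (OmL ω ℓ) u = 1 ∧ energy A p (OmL ω ℓ) u = lambdaM1 A p ω ℓ

/-- `W` is the nonnegative normalized first eigenfunction of the cross-section problem. -/
def IsCrossSectionEigenfunction (A : Ed d → (ℝ × Ed d) →ₗ[ℝ] (ℝ × Ed d)) (p : ℝ)
    (ω : Set (Ed d)) (W : Ed d → ℝ) : Prop :=
  MemW01p p ω W ∧ (∀ y ∈ ω, 0 ≤ W y) ∧ massCS p ω W = 1 ∧ energyCS A p ω W = muOne A p ω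

/-- `λ̃_M¹(Ω_ℓ⁺)`: Dirichlet on `γ_ℓ⁺ ∪ Γ_ℓ⁺`, Neumann at `{0}×ω`. -/
def tlamP (A : Ed d → (ℝ × Ed d) →ₗ[ℝ] (ℝ × Ed d)) (p : ℝ) (ω : Set (Ed d)) (ℓ : ℝ) : ℝ :=
  sInf { r | ∃ u : ℝ × Ed d → ℝ, MemW1p p (OmP ω ℓ) u ∧
      (∀ x ∈ (Ioo (0 : ℝ) ℓ ×ˢ frontier ω) ∪ (({ℓ} : Set ℝ) ×ˢ ω), u x = 0) ∧
      lpmass p (OmP ω ℓ) u = 1 ∧ r = energy A p (OmP ω ℓ) u }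

/-- `λ̃_M¹(Ω_ℓ⁻)`: Dirichlet on `γ_ℓ⁻ ∪ Γ_ℓ⁻`, Neumann at `{0}×ω`. -/
def tlamM (A : Ed d → (ℝ × Ed d) →ₗ[ℝ] (ℝ × Ed d)) (p : ℝ) (ω : Set (Ed d)) (ℓ : ℝ) : ℝ :=
  sInf { r | ∃ u : ℝ × Ed d → ℝ, MemW1p p (OmM ω ℓ) u ∧
      (∀ x ∈ (Ioo (-ℓ) (0 : ℝ) ×ˢ frontier ω) ∪ (({-ℓ} : Set ℝ) ×ˢ ω), u x = 0) ∧
      lpmass p (OmM ω ℓ) u = 1 ∧ r = energy A p (OmM ω ℓ) u }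

/-- Courant–Fischer `k`-th eigenvalue of the mixed problem for `p = 2`. -/
def lambdaMk (A : Ed d → (ℝ × Ed d) →ₗ[ℝ] (ℝ × Ed d)) (ω : Set (Ed d)) (k : ℕ) (ℓ : ℝ) : ℝ :=
  sInf { r | ∃ V : Submodule ℝ ((ℝ × Ed d) → ℝ),
      Module.finrank ℝ V = k ∧ (∀ u ∈ V, MemV 2 (OmL ω ℓ) (gammaL ω ℓ) u) ∧
      r = sSup { e | ∃ u ∈ V, lpmass 2 (OmL ω ℓ) u = 1 ∧ e = energy A 2 (OmL ω ℓ) u } }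

/-- `W^{1,p}(Ω)`-distance of two functions. -/
def W1pdist (p : ℝ) (Ω : Set (ℝ × Ed d)) (u v : (ℝ × Ed d) → ℝ) : ℝ :=
  (∫ x in Ω, (|u x - v x| ^ p + vnorm (grad (fun z => u z - v z) x) ^ p)) ^ (1 / p)

/-- The manifold `M_ℓ = {u ∈ V(Ω) : ∫_Ω |u|^p = 1}`. -/
def sphereM (p : ℝ) (Ω γ : Set (ℝ × Ed d)) : Set ((ℝ × Ed d) → ℝ) :=
  { u | MemV p Ω γ u ∧ lpmass p Ω u = 1 }

/-- `K` is symmetric: `K = -K`. -/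
def SymmetricSet (K : Set ((ℝ × Ed d) → ℝ)) : Prop := ∀ u ∈ K, -u ∈ K

/-- `K ⊆ M` is closed in `M` for the `W^{1,p}` topology. -/
def ClosedInM (p : ℝ) (Ω : Set (ℝ × Ed d)) (M K : Set ((ℝ × Ed d) → ℝ)) : Prop :=
  K ⊆ M ∧ ∀ u ∈ M, (∀ ε > 0, ∃ v ∈ K, W1pdist p Ω u v < ε) → u ∈ K

/-- There is an odd, `W^{1,p}`-continuous, nonvanishing map `h : K → ℝ^m \ {0}`. -/
def HasOddMap (p : ℝ) (Ω : Set (ℝ × Ed d)) (K : Set ((ℝ × Ed d) → ℝ)) (m : ℕ) : Prop :=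
  ∃ h : ((ℝ × Ed d) → ℝ) → EuclideanSpace ℝ (Fin m),
    (∀ u ∈ K, h u ≠ 0) ∧ (∀ u ∈ K, h (-u) = -h u) ∧
    (∀ u ∈ K, ∀ ε > 0, ∃ δ > 0, ∀ v ∈ K, W1pdist p Ω u v < δ → ‖h u - h v‖ < ε)

/-- The Krasnoselskii genus of `K` is at least `k`. -/
def GenusGE (p : ℝ) (Ω : Set (ℝ × Ed d)) (K : Set ((ℝ × Ed d) → ℝ)) (k : ℕ) : Prop :=
  ∀ m : ℕ, m < k → ¬ HasOddMap p Ω K m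

/-- The `k`-th Krasnoselskii eigenvalue `β_k(Ω_ℓ)`. -/
def betaK (A : Ed d → (ℝ × Ed d) →ₗ[ℝ] (ℝ × Ed d)) (p : ℝ) (ω : Set (Ed d)) (ℓ : ℝ)
    (k : ℕ) : ℝ :=
  sInf { r | ∃ K : Set ((ℝ × Ed d) → ℝ),
      ClosedInM p (OmL ω ℓ) (sphereM p (OmL ω ℓ) (gammaL ω ℓ)) K ∧ SymmetricSet K ∧
      GenusGE p (OmL ω ℓ) K k ∧
      r = sSup { e | ∃ u ∈ K, e = energy A p (OmL ω ℓ) u } }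

open scoped ENNReal NNReal

lemma pointwise_bound {k : ℕ} {p R : ℝ} (hp : 1 < p) (hR : 0 < R)
    {ω : Set (Ed k)} (hω : IsOpen ω) (hsub : ω ⊆ Metric.ball 0 R)
    {w : Ed k → ℝ} (hwc : ContinuousOn w (closure ω))
    (hwd : ∀ y ∈ ω, DifferentiableAt ℝ w y)
    (hw0 : ∀ y ∈ frontier ω, w y = 0)
    (e₀ : Ed k) (he₀ : ‖e₀‖ = 1)
    (Ψ : Ed k → ℝ≥0∞) (hΨ : ∀ z ∈ ω, ENNReal.ofReal (‖gradient w z‖ ^ p) ≤ Ψ z)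
    {y : Ed k} (hy : y ∈ ω) :
    ENNReal.ofReal (|w y| ^ p) ≤
      ENNReal.ofReal ((2*R) ^ (p-1)) *
        ∫⁻ s in Ioo (-R) R, Ψ (y + (s - (inner ℝ y e₀ : ℝ)) • e₀) := by
  have hp0 : (0:ℝ) < p := lt_trans one_pos hp
  set t₀ : ℝ := (inner ℝ y e₀ : ℝ) with ht₀
  set T : ℝ → Ed k := fun s => y + (s - t₀) • e₀ with hTdef
  have hTcoord : ∀ s, (inner ℝ (T s) e₀ : ℝ) = s := by
    intro s
    simp only [hTdef, inner_add_left, real_inner_smul_left, real_inner_self_eq_norm_sq, he₀]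
    rw [← ht₀]; ring
  have habs : ∀ z : Ed k, |(inner ℝ z e₀ : ℝ)| ≤ ‖z‖ := fun z => by
    calc |(inner ℝ z e₀ : ℝ)| ≤ ‖z‖ * ‖e₀‖ := abs_real_inner_le_norm z e₀
    _ = ‖z‖ := by rw [he₀, mul_one]
  have hmem : ∀ s, T s ∈ ω → s ∈ Ioo (-R) R := by
    intro s hs
    have h1 := habs (T s); rw [hTcoord s] at h1
    have hb := hsub hs
    rw [Metric.mem_ball, dist_zero_right] at hb
    have := lt_of_le_of_lt h1 hb
    exact abs_lt.1 this
  have hTt₀ : T t₀ = y := by simp [hTdef]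
  have ht₀mem : t₀ ∈ Ioo (-R) R := hmem t₀ (by rw [hTt₀]; exact hy)
  set S : Set ℝ := {s | s ≤ t₀ ∧ T s ∉ ω} with hSdef
  have hSne : (-R) ∈ S := by
    refine ⟨by linarith [ht₀mem.1], fun h => ?_⟩
    exact absurd (hmem _ h).1 (lt_irrefl _)
  have hSbdd : BddAbove S := ⟨t₀, fun s hs => hs.1⟩
  set a : ℝ := sSup S with ha
  have haR : -R ≤ a := le_csSup hSbdd hSne
  have hat₀ : a ≤ t₀ := csSup_le ⟨-R, hSne⟩ fun s hs => hs.1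
  have hTsub : ∀ s s' : ℝ, T s - T s' = (s - s') • e₀ := by
    intro s s'
    simp only [hTdef]
    rw [add_sub_add_left_eq_sub, ← sub_smul]
    congr 1
    ring
  have halt : a < t₀ := by
    obtain ⟨δ, hδpos, hb⟩ := Metric.isOpen_iff.1 hω y hy
    have h1 : ∀ s ∈ S, s ≤ t₀ - δ := by
      intro s hs
      by_contra hcon
      push_neg at hcon
      apply hs.2
      apply hb
      rw [Metric.mem_ball, dist_eq_norm, ← hTt₀, hTsub, norm_smul, he₀, mul_one,
        Real.norm_eq_abs, abs_sub_lt_iff]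
      constructor <;> linarith [hs.1]
    have := csSup_le ⟨-R, hSne⟩ h1
    rw [← ha] at this
    linarith
  have hIoo : ∀ s, a < s → s ≤ t₀ → T s ∈ ω := by
    intro s h1 h2
    by_contra h
    exact absurd (le_csSup hSbdd ⟨h2, h⟩) (not_le.2 h1)
  have hTa_not : T a ∉ ω := by
    intro h
    obtain ⟨ε, hεpos, hb⟩ := Metric.isOpen_iff.1 hω _ h
    obtain ⟨s, hsS, hs⟩ := exists_lt_of_lt_csSup ⟨-R, hSne⟩ (show a - ε < a by linarith)
    have hsa : s ≤ a := le_csSup hSbdd hsS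
    apply hsS.2
    apply hb
    rw [Metric.mem_ball, dist_eq_norm, hTsub, norm_smul, he₀, mul_one, Real.norm_eq_abs,
      abs_sub_lt_iff]
    constructor <;> linarith
  have hTcont : Continuous T := by
    apply continuous_const.add
    exact (continuous_id.sub continuous_const).smul continuous_const
  have hTa_cl : T a ∈ closure ω := by
    apply mem_closure_of_tendsto ((hTcont.tendsto a).mono_left nhdsWithin_le_nhds :
      Tendsto T (nhdsWithin a (Ioi a)) (nhds (T a)))
    filter_upwards [Ioc_mem_nhdsGT halt] with s hs
    exact hIoo s hs.1 hs.2
  have hga : w (T a) = 0 := hw0 _ (by rw [hω.frontier_eq]; exact ⟨hTa_cl, hTa_not⟩)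
  have hTderiv : ∀ s : ℝ, HasDerivAt T e₀ s := by
    intro s
    have h1 : HasDerivAt (fun s : ℝ => s - t₀) 1 s := (hasDerivAt_id s).sub_const t₀
    have h2 := h1.smul_const e₀
    rw [one_smul] at h2
    exact h2.const_add y
  set g : ℝ → ℝ := fun s => w (T s) with hgdef
  set D : ℝ → ℝ := deriv g with hDdef
  have hgderiv : ∀ s ∈ Ioo a t₀, HasDerivAt g (fderiv ℝ w (T s) e₀) s := by
    intro s hs
    exact ((hwd _ (hIoo s hs.1 hs.2.le)).hasFDerivAt).comp_hasDerivAt s (hTderiv s)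
  have hderiv_eq : ∀ s ∈ Ioo a t₀, D s = fderiv ℝ w (T s) e₀ :=
    fun s hs => (hgderiv s hs).deriv
  have hbound : ∀ s ∈ Ioo a t₀, |D s| ≤ ‖gradient w (T s)‖ := by
    intro s hs
    rw [hderiv_eq s hs]
    have h1 := (fderiv ℝ w (T s)).le_opNorm e₀
    rw [he₀, mul_one, Real.norm_eq_abs] at h1
    have h2 : ‖gradient w (T s)‖ = ‖fderiv ℝ w (T s)‖ := by
      simp only [gradient, LinearIsometryEquiv.norm_map]
    rw [h2]; exact h1
  set J : ℝ≥0∞ := ∫⁻ s in Ioo (-R) R, Ψ (T s) with hJdef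
  have hgoal : ENNReal.ofReal (|w y| ^ p) ≤ ENNReal.ofReal ((2*R) ^ (p-1)) * J := by
    by_cases hJtop : J = ⊤
    · rw [hJtop, ENNReal.mul_top]
      · exact le_top
      · exact ne_of_gt (ENNReal.ofReal_pos.2 (Real.rpow_pos_of_pos (by linarith) _))
    set I' : ℝ≥0∞ := ∫⁻ s in Ioo a t₀, ENNReal.ofReal (|D s| ^ p) with hI'def
    have hI'J : I' ≤ J := by
      calc I' ≤ ∫⁻ s in Ioo a t₀, Ψ (T s) := by
            apply lintegral_mono_ae
            refine (ae_restrict_iff' measurableSet_Ioo).2 (ae_of_all _ fun s hs => ?_)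
            calc ENNReal.ofReal (|D s| ^ p)
                ≤ ENNReal.ofReal (‖gradient w (T s)‖ ^ p) :=
                  ENNReal.ofReal_le_ofReal
                    (Real.rpow_le_rpow (abs_nonneg _) (hbound s hs) hp0.le)
              _ ≤ Ψ (T s) := hΨ _ (hIoo s hs.1 hs.2.le)
      _ ≤ J := by
            apply lintegral_mono'
            · apply Measure.restrict_mono _ le_rfl
              intro s hs
              exact ⟨lt_of_le_of_lt haR hs.1, lt_trans hs.2 ht₀mem.2⟩
            · exact le_rfl
    have hI'top : I' ≠ ⊤ := ne_top_of_le_ne_top hJtop hI'J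
    have hq := Real.HolderConjugate.conjExponent hp
    set q : ℝ := Real.conjExponent p with hqdef
    have hDmeas : Measurable D := measurable_deriv g
    set K : ℝ≥0∞ := ∫⁻ s in Ioo a t₀, ENNReal.ofReal |D s| with hKdef
    have hK : K ≤ I' ^ (1/p) * (ENNReal.ofReal (t₀ - a)) ^ (1/q) := by
      have h0 := ENNReal.lintegral_mul_le_Lp_mul_Lq (volume.restrict (Ioo a t₀)) hq
        (f := fun s => ENNReal.ofReal |D s|) (g := fun _ => 1)
        (hDmeas.abs.ennreal_ofReal.aemeasurable) aemeasurable_const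
      simp only [Pi.mul_apply, mul_one, ENNReal.one_rpow, lintegral_one,
        Measure.restrict_apply_univ, Real.volume_Ioo] at h0
      calc K ≤ (∫⁻ s in Ioo a t₀, ENNReal.ofReal |D s| ^ p) ^ (1/p) *
            (ENNReal.ofReal (t₀ - a)) ^ (1/q) := h0
        _ = I' ^ (1/p) * (ENNReal.ofReal (t₀ - a)) ^ (1/q) := by
            congr 1
            rw [hI'def]
            congr 1
            apply lintegral_congr
            intro s
            rw [ENNReal.ofReal_rpow_of_nonneg (abs_nonneg _) hp0.le]
    have hKtop : K ≠ ⊤ := by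
      apply ne_top_of_le_ne_top _ hK
      exact ENNReal.mul_ne_top
        (ENNReal.rpow_ne_top_of_nonneg hq.one_div_nonneg hI'top)
        (ENNReal.rpow_ne_top_of_nonneg hq.symm.one_div_nonneg ENNReal.ofReal_ne_top)
    have hint : IntegrableOn D (Ioo a t₀) := by
      refine ⟨hDmeas.aestronglyMeasurable, ?_⟩
      rw [hasFiniteIntegral_iff_norm]
      simp only [Real.norm_eq_abs]
      exact lt_top_iff_ne_top.2 hKtop
    have hii : IntervalIntegrable D volume a t₀ :=
      (intervalIntegrable_iff_integrableOn_Ioo_of_le halt.le).2 hint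
    have hgcont : ContinuousOn g (Icc a t₀) := by
      apply hwc.comp hTcont.continuousOn
      intro s hs
      rcases eq_or_lt_of_le hs.1 with h | h
      · rw [← h]; exact hTa_cl
      · exact subset_closure (hIoo s h hs.2)
    have hftc : ∫ s in a..t₀, D s = g t₀ - g a := by
      apply intervalIntegral.integral_eq_sub_of_hasDerivAt_of_le halt.le hgcont _ hii
      intro s hs
      have := hgderiv s hs
      rwa [← hderiv_eq s hs] at this
    have hwy : |w y| ≤ ∫ s in Ioo a t₀, |D s| := by
      have h1 : w y = ∫ s in a..t₀, D s := by
        rw [hftc, hgdef]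
        simp only [hTt₀, hga, sub_zero]
      calc |w y| = |∫ s in a..t₀, D s| := by rw [h1]
        _ ≤ ∫ s in a..t₀, |D s| := by
            have h2 := intervalIntegral.norm_integral_le_integral_norm (f := D)
              (μ := volume) (a := a) (b := t₀) halt.le
            simpa only [Real.norm_eq_abs] using h2
        _ = ∫ s in Ioc a t₀, |D s| := intervalIntegral.integral_of_le halt.le
        _ = ∫ s in Ioo a t₀, |D s| := integral_Ioc_eq_integral_Ioo
    have h1 : ENNReal.ofReal |w y| ≤ K := by
      have h2 : ENNReal.ofReal (∫ s in Ioo a t₀, |D s|) = K := by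
        rw [hKdef]
        exact ofReal_integral_eq_lintegral_ofReal hint.abs (ae_of_all _ fun s => abs_nonneg _)
      rw [← h2]
      exact ENNReal.ofReal_le_ofReal hwy
    have hpq : p / q = p - 1 := hq.div_conj_eq_sub_one
    calc ENNReal.ofReal (|w y| ^ p) = ENNReal.ofReal |w y| ^ p :=
          (ENNReal.ofReal_rpow_of_nonneg (abs_nonneg _) hp0.le).symm
      _ ≤ K ^ p := ENNReal.rpow_le_rpow h1 hp0.le
      _ ≤ (I' ^ (1/p) * (ENNReal.ofReal (t₀ - a)) ^ (1/q)) ^ p :=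
          ENNReal.rpow_le_rpow hK hp0.le
      _ = I' * (ENNReal.ofReal (t₀ - a)) ^ (p - 1) := by
          rw [ENNReal.mul_rpow_of_nonneg _ _ hp0.le, ← ENNReal.rpow_mul, ← ENNReal.rpow_mul,
            one_div_mul_cancel (ne_of_gt hp0), ENNReal.rpow_one,
            show 1/q * p = p/q by ring, hpq]
      _ ≤ J * (ENNReal.ofReal (2*R)) ^ (p - 1) :=
          mul_le_mul' hI'J (ENNReal.rpow_le_rpow
            (ENNReal.ofReal_le_ofReal (by linarith [ht₀mem.2, haR])) (by linarith))
      _ = ENNReal.ofReal ((2*R) ^ (p-1)) * J := by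
          rw [mul_comm, ENNReal.ofReal_rpow_of_pos (by linarith)]
  exact hgoal


lemma crossSection {m : ℕ} {p R : ℝ} (hp : 1 < p) (hR : 0 < R)
    {ω : Set (Ed (m+1))} (hω : IsOpen ω) (hsub : ω ⊆ Metric.ball 0 R)
    {w : Ed (m+1) → ℝ} (hwc : ContinuousOn w (closure ω))
    (hwd : ∀ y ∈ ω, DifferentiableAt ℝ w y)
    (hw0 : ∀ y ∈ frontier ω, w y = 0)
    (G : Ed (m+1) → ℝ≥0∞) (hGmeas : Measurable G)
    (hG : ∀ y ∈ ω, ENNReal.ofReal (‖gradient w y‖ ^ p) ≤ G y) :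
    ∫⁻ y in ω, ENNReal.ofReal (|w y| ^ p) ≤
      ENNReal.ofReal ((2*R) ^ p) * ∫⁻ y in ω, G y := by
  have hp0 : (0:ℝ) < p := lt_trans one_pos hp
  set e₀ : Ed (m+1) := EuclideanSpace.single 0 1 with he₀def
  have he₀ : ‖e₀‖ = 1 := by
    rw [he₀def, EuclideanSpace.norm_single, norm_one]
  have hinner : ∀ y : Ed (m+1), (inner ℝ y e₀ : ℝ) = y 0 := by
    intro y
    rw [he₀def, EuclideanSpace.inner_single_right]
    simp
  set Ψ : Ed (m+1) → ℝ≥0∞ := ω.indicator G with hΨdef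
  have hΨmeas : Measurable Ψ := hGmeas.indicator hω.measurableSet
  have hΨ : ∀ z ∈ ω, ENNReal.ofReal (‖gradient w z‖ ^ p) ≤ Ψ z := fun z hz => by
    rw [hΨdef, indicator_of_mem hz]; exact hG z hz
  set T : Ed (m+1) → ℝ → Ed (m+1) := fun y s => y + (s - (inner ℝ y e₀ : ℝ)) • e₀ with hTdef
  have hTcont : Continuous (Function.uncurry T) := by
    apply Continuous.add continuous_fst
    exact ((continuous_snd.sub (continuous_fst.inner continuous_const)).smul continuous_const)
  set J : Ed (m+1) → ℝ≥0∞ := fun y => ∫⁻ s in Ioo (-R) R, Ψ (T y s) with hJdef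
  have hJmeas : Measurable J := by
    have h1 : Measurable fun q : Ed (m+1) × ℝ => Ψ (T q.1 q.2) :=
      hΨmeas.comp hTcont.measurable
    exact h1.lintegral_prod_right'
  have step1 : ∫⁻ y in ω, ENNReal.ofReal (|w y| ^ p) ≤
      ENNReal.ofReal ((2*R) ^ (p-1)) * ∫⁻ y in ω, J y := by
    rw [← lintegral_const_mul' _ _ ENNReal.ofReal_ne_top]
    apply lintegral_mono_ae
    refine (ae_restrict_iff' hω.measurableSet).2 (ae_of_all _ fun y hy => ?_)
    exact pointwise_bound hp hR hω hsub hwc hwd hw0 e₀ he₀ Ψ hΨ hy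
  set slab : Set (Ed (m+1)) := {y | (inner ℝ y e₀ : ℝ) ∈ Ioo (-R) R} with hslabdef
  have hslabmeas : MeasurableSet slab := by
    have h1 : Measurable fun y : Ed (m+1) => (inner ℝ y e₀ : ℝ) :=
      (continuous_id.inner continuous_const).measurable
    exact h1 measurableSet_Ioo
  have hωslab : ω ⊆ slab := by
    intro y hy
    have h1 : |(inner ℝ y e₀ : ℝ)| ≤ ‖y‖ := by
      calc |(inner ℝ y e₀ : ℝ)| ≤ ‖y‖ * ‖e₀‖ := abs_real_inner_le_norm y e₀
      _ = ‖y‖ := by rw [he₀, mul_one]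
    have hb := hsub hy
    rw [Metric.mem_ball, dist_zero_right] at hb
    exact abs_lt.1 (lt_of_le_of_lt h1 hb)
  have step2 : ∫⁻ y in ω, J y ≤ ∫⁻ y in slab, J y :=
    lintegral_mono' (Measure.restrict_mono hωslab le_rfl) le_rfl
  -- transport to ℝ × (Fin m → ℝ)
  set P : ℝ × (Fin m → ℝ) → Ed (m+1) := fun q =>
    (MeasurableEquiv.toLp 2 (Fin (m+1) → ℝ))
      ((MeasurableEquiv.piFinSuccAbove (fun _ : Fin (m+1) => ℝ) 0).symm q) with hPdef
  have hP : MeasurePreserving P volume volume :=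
    (PiLp.volume_preserving_toLp (Fin (m+1))).comp
      ((volume_preserving_piFinSuccAbove (fun _ : Fin (m+1) => ℝ) 0).symm)
  have hP0 : ∀ (t : ℝ) (z : Fin m → ℝ), P (t, z) 0 = t := by
    intro t z
    show ((MeasurableEquiv.piFinSuccAbove (fun _ : Fin (m+1) => ℝ) 0).symm (t, z)) 0 = t
    simp [MeasurableEquiv.piFinSuccAbove_symm_apply, Fin.insertNthEquiv]
  have hPsucc : ∀ (t : ℝ) (z : Fin m → ℝ) (j : Fin m), P (t, z) j.succ = z j := by
    intro t z j
    show ((MeasurableEquiv.piFinSuccAbove (fun _ : Fin (m+1) => ℝ) 0).symm (t, z)) j.succ = z j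
    rw [MeasurableEquiv.piFinSuccAbove_symm_apply]
    simp only [Fin.insertNthEquiv_apply]
    rw [← Fin.zero_succAbove j, Fin.insertNth_apply_succAbove]
  have hPinner : ∀ (t : ℝ) (z : Fin m → ℝ), (inner ℝ (P (t, z)) e₀ : ℝ) = t := by
    intro t z
    rw [hinner, hP0]
  have hPT : ∀ (t s : ℝ) (z : Fin m → ℝ), T (P (t, z)) s = P (s, z) := by
    intro t s z
    show P (t, z) + (s - (inner ℝ (P (t,z)) e₀ : ℝ)) • e₀ = P (s, z)
    rw [hPinner]
    ext i
    induction i using Fin.cases with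
    | zero =>
      rw [PiLp.add_apply, PiLp.smul_apply, hP0, hP0, he₀def, smul_eq_mul,
        EuclideanSpace.single_apply, if_pos rfl]
      ring
    | succ j =>
      rw [PiLp.add_apply, PiLp.smul_apply, hPsucc, hPsucc, he₀def, smul_eq_mul,
        EuclideanSpace.single_apply, if_neg (Fin.succ_ne_zero j)]
      ring
  have hmain : ∫⁻ y in slab, J y ≤ ENNReal.ofReal (2*R) * ∫⁻ y in ω, G y := by
    have hΨint : ∫⁻ y, Ψ y = ∫⁻ y in ω, G y := by
      rw [hΨdef, lintegral_indicator hω.measurableSet]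
    set F : Ed (m+1) → ℝ≥0∞ := slab.indicator J with hFdef
    have hFmeas : Measurable F := hJmeas.indicator hslabmeas
    have h1 : ∫⁻ y in slab, J y = ∫⁻ y, F y := (lintegral_indicator hslabmeas J).symm
    have h2 : ∫⁻ y, F y = ∫⁻ q, F (P q) ∂(volume : Measure (ℝ × (Fin m → ℝ))) :=
      (hP.lintegral_comp hFmeas).symm
    have h3 : ∫⁻ q, F (P q) ∂(volume : Measure (ℝ × (Fin m → ℝ)))
        = ∫⁻ t, ∫⁻ z, F (P (t, z)) := by
      rw [Measure.volume_eq_prod, lintegral_prod]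
      exact (hFmeas.comp hP.measurable).aemeasurable
    set H : (Fin m → ℝ) → ℝ≥0∞ := fun z => ∫⁻ s in Ioo (-R) R, Ψ (P (s, z)) with hHdef
    have hFP : ∀ t z, F (P (t, z)) = (Ioo (-R) R).indicator (fun _ => H z) t := by
      intro t z
      rw [hFdef]
      by_cases ht : t ∈ Ioo (-R) R
      · rw [indicator_of_mem ht,
          indicator_of_mem (show P (t,z) ∈ slab by rw [hslabdef, mem_setOf_eq, hPinner]; exact ht)]
        rw [hJdef]
        apply lintegral_congr
        intro s
        rw [hPT]
      · rw [indicator_of_notMem ht,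
          indicator_of_notMem
            (show P (t,z) ∉ slab by rw [hslabdef, mem_setOf_eq, hPinner]; exact ht)]
    have h4 : ∫⁻ t, ∫⁻ z, F (P (t, z)) = ENNReal.ofReal (2*R) * ∫⁻ z, H z := by
      have h5 : ∀ t : ℝ, ∫⁻ z, (Ioo (-R) R).indicator (fun _ => H z) t
          = (Ioo (-R) R).indicator (fun _ => ∫⁻ z, H z) t := by
        intro t
        by_cases ht : t ∈ Ioo (-R) R
        · rw [indicator_of_mem ht]
          apply lintegral_congr
          intro z
          rw [indicator_of_mem ht]
        · rw [indicator_of_notMem ht]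
          rw [lintegral_congr (fun z => indicator_of_notMem ht _), lintegral_zero]
      calc ∫⁻ t, ∫⁻ z, F (P (t, z))
          = ∫⁻ t, (Ioo (-R) R).indicator (fun _ => ∫⁻ z, H z) t := by
            apply lintegral_congr
            intro t
            rw [← h5]
            apply lintegral_congr
            intro z
            rw [hFP]
        _ = ∫⁻ _ in Ioo (-R) R, ∫⁻ z, H z := lintegral_indicator measurableSet_Ioo _
        _ = ENNReal.ofReal (2*R) * ∫⁻ z, H z := by
            rw [setLIntegral_const, Real.volume_Ioo, mul_comm]
            congr 2
            ring
    have h6 : ∫⁻ z, H z ≤ ∫⁻ y in ω, G y := by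
      calc ∫⁻ z, H z ≤ ∫⁻ z, ∫⁻ s, Ψ (P (s, z)) := by
            apply lintegral_mono
            intro z
            exact lintegral_mono' Measure.restrict_le_self le_rfl
        _ = ∫⁻ s, ∫⁻ z, Ψ (P (s, z)) := by
            apply lintegral_lintegral_swap
            exact ((hΨmeas.comp hP.measurable).comp measurable_swap).aemeasurable
        _ = ∫⁻ q, Ψ (P q) ∂(volume : Measure (ℝ × (Fin m → ℝ))) := by
            rw [Measure.volume_eq_prod, lintegral_prod]
            exact (hΨmeas.comp hP.measurable).aemeasurable
        _ = ∫⁻ y, Ψ y := hP.lintegral_comp hΨmeas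
        _ = ∫⁻ y in ω, G y := hΨint
    calc ∫⁻ y in slab, J y = ∫⁻ t, ∫⁻ z, F (P (t, z)) := by rw [h1, h2, h3]
      _ = ENNReal.ofReal (2*R) * ∫⁻ z, H z := h4
      _ ≤ ENNReal.ofReal (2*R) * ∫⁻ y in ω, G y := mul_le_mul' le_rfl h6
  calc ∫⁻ y in ω, ENNReal.ofReal (|w y| ^ p)
      ≤ ENNReal.ofReal ((2*R) ^ (p-1)) * ∫⁻ y in ω, J y := step1
    _ ≤ ENNReal.ofReal ((2*R) ^ (p-1)) * (ENNReal.ofReal (2*R) * ∫⁻ y in ω, G y) :=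
        mul_le_mul' le_rfl (le_trans step2 hmain)
    _ = ENNReal.ofReal ((2*R) ^ p) * ∫⁻ y in ω, G y := by
        rw [← mul_assoc, ← ENNReal.ofReal_mul (Real.rpow_nonneg (by linarith) _)]
        congr 2
        rw [show p = (p-1)+1 by ring, Real.rpow_add_one (show (2*R) ≠ 0 by positivity)]
        ring_nf

/-- Lemma 2.3 of the paper: Poincaré inequality on the cylinder `U × ω`,
with a constant depending only on `p` and `ω` (independent of `U`). -/
theorem poincare_inequality_on_cylinder
    (d : ℕ) (hd : 1 ≤ d) (p : ℝ) (hp₁ : 1 < p)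
    (ω : Set (Ed d)) (hω : IsOpen ω) (hωbd : Bornology.IsBounded ω) (hωne : ω.Nonempty) :
    ∃ C : ℝ, 0 < C ∧ ∀ U : Set ℝ, IsOpen U → ∀ u : ℝ × Ed d → ℝ,
      MemV p (U ×ˢ ω) (U ×ˢ frontier ω) u →
      (∫ x in U ×ˢ ω, |u x| ^ p) ^ (1 / p) ≤
        C * (∫ x in U ×ˢ ω, vnorm (grad u x) ^ p) ^ (1 / p) := by
  obtain ⟨m, rfl⟩ : ∃ m, d = m + 1 := ⟨d - 1, (Nat.succ_pred_eq_of_pos hd).symm⟩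
  have hp0 : (0:ℝ) < p := lt_trans one_pos hp₁
  obtain ⟨r, hr⟩ := hωbd.subset_ball 0
  set R : ℝ := max r 1 with hRdef
  have hR : 0 < R := lt_of_lt_of_le one_pos (le_max_right r 1)
  have hsubR : ω ⊆ Metric.ball 0 R :=
    hr.trans (Metric.ball_subset_ball (le_max_left r 1))
  refine ⟨2 * R, by linarith, ?_⟩
  intro U hU u hu
  obtain ⟨⟨hcont, hdiff, humem, hgmem⟩, hzero⟩ := hu
  set Ω : Set (ℝ × Ed (m+1)) := U ×ˢ ω with hΩdef
  have hΩopen : IsOpen Ω := hU.prod hω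
  have hΩmeas : MeasurableSet Ω := hΩopen.measurableSet
  -- measurable representative of the cross-sectional gradient norm
  set G : ℝ × Ed (m+1) → ℝ :=
    fun x => ‖(fderiv ℝ u x).comp (ContinuousLinearMap.inr ℝ ℝ (Ed (m+1)))‖ with hGdef
  have hGmeas : Measurable G := by
    have h2 : Continuous fun L : (ℝ × Ed (m+1)) →L[ℝ] ℝ =>
        L.comp (ContinuousLinearMap.inr ℝ ℝ (Ed (m+1))) :=
      ((ContinuousLinearMap.compSL (Ed (m+1)) (ℝ × Ed (m+1)) ℝ (RingHom.id ℝ)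
        (RingHom.id ℝ)).flip (ContinuousLinearMap.inr ℝ ℝ (Ed (m+1)))).continuous
    exact (h2.norm.measurable).comp (measurable_fderiv ℝ u)
  have hGrad_eq : ∀ x ∈ Ω, ‖gradient (fun y => u (x.1, y)) x.2‖ = G x := by
    intro x hx
    have hdx := (hdiff x hx).hasFDerivAt
    rw [show x = (x.1, x.2) from rfl] at hdx
    have h1 : HasFDerivAt (fun y => u (x.1, y))
        ((fderiv ℝ u x).comp (ContinuousLinearMap.inr ℝ ℝ (Ed (m+1)))) x.2 := by
      have := hdx.comp x.2 (hasFDerivAt_prodMk_right x.1 x.2)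
      exact this
    simp only [gradient]
    rw [h1.fderiv, LinearIsometryEquiv.norm_map]
  have hGle : ∀ x ∈ Ω, G x ≤ vnorm (grad u x) := by
    intro x hx
    rw [← hGrad_eq x hx]
    show ‖gradient (fun y => u (x.1, y)) x.2‖ ≤
      Real.sqrt ((grad u x).1 ^ 2 + ‖(grad u x).2‖ ^ 2)
    have h1 : ‖gradient (fun y => u (x.1, y)) x.2‖ = ‖(grad u x).2‖ := rfl
    rw [h1]
    have h2 := Real.sqrt_le_sqrt (show ‖(grad u x).2‖ ^ 2 ≤
      (grad u x).1 ^ 2 + ‖(grad u x).2‖ ^ 2 by nlinarith [sq_nonneg ((grad u x).1)])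
    rwa [Real.sqrt_sq (norm_nonneg ((grad u x).2))] at h2
  have hGnonneg : ∀ x, 0 ≤ G x := fun x => norm_nonneg _
  -- the product-restricted measure
  have hres : (volume : Measure (ℝ × Ed (m+1))).restrict Ω
      = (volume.restrict U).prod (volume.restrict ω) := by
    rw [hΩdef, Measure.volume_eq_prod, Measure.prod_restrict]
  have hφ1 : Measurable fun v : ℝ => ENNReal.ofReal (|v| ^ p) :=
    (((Real.continuous_rpow_const hp0.le).comp continuous_abs).measurable).ennreal_ofReal
  have hφ2 : Measurable fun v : ℝ => ENNReal.ofReal (v ^ p) :=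
    ((Real.continuous_rpow_const hp0.le).measurable).ennreal_ofReal
  have huae : AEMeasurable u (volume.restrict Ω) :=
    (hcont.mono subset_closure).aemeasurable hΩmeas
  -- main lintegral inequality
  have key : ∫⁻ x in Ω, ENNReal.ofReal (|u x| ^ p) ≤
      ENNReal.ofReal ((2*R) ^ p) * ∫⁻ x in Ω, ENNReal.ofReal (vnorm (grad u x) ^ p) := by
    have hF1ae : AEMeasurable (fun x => ENNReal.ofReal (|u x| ^ p))
        ((volume.restrict U).prod (volume.restrict ω)) := by
      rw [← hres]; exact hφ1.comp_aemeasurable huae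
    have hF2meas : Measurable fun x : ℝ × Ed (m+1) => ENNReal.ofReal (G x ^ p) :=
      hφ2.comp hGmeas
    calc ∫⁻ x in Ω, ENNReal.ofReal (|u x| ^ p)
        = ∫⁻ t in U, ∫⁻ y in ω, ENNReal.ofReal (|u (t, y)| ^ p) := by
          rw [hres, lintegral_prod _ hF1ae]
      _ ≤ ∫⁻ t in U, (ENNReal.ofReal ((2*R) ^ p) * ∫⁻ y in ω, ENNReal.ofReal (G (t, y) ^ p)) := by
          apply lintegral_mono_ae
          refine (ae_restrict_iff' hU.measurableSet).2 (ae_of_all _ fun t ht => ?_)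
          apply crossSection hp₁ hR hω hsubR ?_ ?_ ?_ _ (hF2meas.comp (measurable_const.prodMk measurable_id)) ?_
          · -- continuity of the slice on the closure
            apply hcont.comp (Continuous.continuousOn (Continuous.prodMk_right t))
            intro y hy
            rw [hΩdef, closure_prod_eq]
            exact ⟨subset_closure ht, hy⟩
          · intro y hy
            exact (hdiff (t, y) ⟨ht, hy⟩).comp y
              (hasFDerivAt_prodMk_right t y).differentiableAt
          · intro y hy
            exact hzero (t, y) ⟨ht, hy⟩
          · intro y hy
            rw [hGrad_eq (t, y) ⟨ht, hy⟩]
            exact le_rfl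
      _ = ENNReal.ofReal ((2*R) ^ p) * ∫⁻ t in U, ∫⁻ y in ω, ENNReal.ofReal (G (t, y) ^ p) :=
          lintegral_const_mul' _ _ ENNReal.ofReal_ne_top
      _ = ENNReal.ofReal ((2*R) ^ p) * ∫⁻ x in Ω, ENNReal.ofReal (G x ^ p) := by
          rw [hres, lintegral_prod _ (hF2meas.aemeasurable)]
      _ ≤ ENNReal.ofReal ((2*R) ^ p) * ∫⁻ x in Ω, ENNReal.ofReal (vnorm (grad u x) ^ p) := by
          apply mul_le_mul' le_rfl
          apply lintegral_mono_ae
          refine (ae_restrict_iff' hΩmeas).2 (ae_of_all _ fun x hx => ?_)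
          exact ENNReal.ofReal_le_ofReal
            (Real.rpow_le_rpow (hGnonneg x) (hGle x hx) hp0.le)
  -- finiteness of the gradient lintegral
  have hvnn : ∀ x : ℝ × Ed (m+1), 0 ≤ vnorm (grad u x) := fun x => Real.sqrt_nonneg _
  have hL2 : ∫⁻ x in Ω, ENNReal.ofReal (vnorm (grad u x) ^ p) ≠ ⊤ := by
    have hq0 : (ENNReal.ofReal p) ≠ 0 := by
      simp [ENNReal.ofReal_eq_zero, not_le, hp0]
    have h2 := hgmem.2
    rw [eLpNorm_eq_lintegral_rpow_enorm_toReal hq0 ENNReal.ofReal_ne_top] at h2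
    rw [ENNReal.toReal_ofReal hp0.le] at h2
    have h3 : ∫⁻ x in Ω, ENNReal.ofReal (vnorm (grad u x) ^ p)
        = ∫⁻ x in Ω, ‖vnorm (grad u x)‖ₑ ^ p := by
      apply lintegral_congr
      intro x
      rw [← ofReal_norm_eq_enorm, Real.norm_of_nonneg (hvnn x),
        ENNReal.ofReal_rpow_of_nonneg (hvnn x) hp0.le]
    rw [h3]
    intro hcontra
    rw [hcontra] at h2
    rw [ENNReal.top_rpow_of_pos (by positivity)] at h2
    exact absurd h2 (lt_irrefl _)
  -- convert Bochner integrals to lintegrals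
  have hA : ∫ x in Ω, |u x| ^ p
      = (∫⁻ x in Ω, ENNReal.ofReal (|u x| ^ p)).toReal := by
    apply integral_eq_lintegral_of_nonneg_ae
    · exact ae_of_all _ fun x => Real.rpow_nonneg (abs_nonneg _) p
    · exact ((Real.continuous_rpow_const hp0.le).comp
        continuous_abs).comp_aestronglyMeasurable
        ((hcont.mono subset_closure).aestronglyMeasurable hΩmeas)
  have hB : ∫ x in Ω, vnorm (grad u x) ^ p
      = (∫⁻ x in Ω, ENNReal.ofReal (vnorm (grad u x) ^ p)).toReal := by
    apply integral_eq_lintegral_of_nonneg_ae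
    · exact ae_of_all _ fun x => Real.rpow_nonneg (hvnn x) p
    · exact (Real.continuous_rpow_const hp0.le).comp_aestronglyMeasurable hgmem.1
  have hAB : ∫ x in Ω, |u x| ^ p ≤ (2*R) ^ p * ∫ x in Ω, vnorm (grad u x) ^ p := by
    rw [hA, hB]
    have h1 := ENNReal.toReal_mono
      (ENNReal.mul_ne_top ENNReal.ofReal_ne_top hL2) key
    rwa [ENNReal.toReal_mul, ENNReal.toReal_ofReal (Real.rpow_nonneg (by linarith) p)] at h1
  have hAnn : (0:ℝ) ≤ ∫ x in Ω, |u x| ^ p :=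
    integral_nonneg fun x => Real.rpow_nonneg (abs_nonneg _) p
  have hBnn : (0:ℝ) ≤ ∫ x in Ω, vnorm (grad u x) ^ p :=
    integral_nonneg fun x => Real.rpow_nonneg (hvnn x) p
  calc (∫ x in Ω, |u x| ^ p) ^ (1/p)
      ≤ ((2*R) ^ p * ∫ x in Ω, vnorm (grad u x) ^ p) ^ (1/p) :=
        Real.rpow_le_rpow hAnn hAB (by positivity)
    _ = 2 * R * (∫ x in Ω, vnorm (grad u x) ^ p) ^ (1/p) := by
        rw [Real.mul_rpow (Real.rpow_nonneg (by linarith) p) hBnn,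
          ← Real.rpow_mul (by linarith : (0:ℝ) ≤ 2*R),
          mul_one_div_cancel (ne_of_gt hp0), Real.rpow_one]
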